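/- arXiv:2007.01533 — 2 statements merged into one kernel-verified Lean document; each statement's English description precedes it below -/
import Mathlib

section
/- (Mader's theorem) Let G=(V,E) be a finite simple unweighted graph and let d be a positive integer. If |E|/|V| ≥ d, then there exists a subset S ⊆ V such that the induced subgraph G[S] is (⌊d/2⌋ + 1)-vertex-connected and every vertex of G[S] has degree strictly greater than d in G[S]. -/
open Finset
open scoped Classical

noncomputable section

variable {V : Type*} [Fintype V] [DecidableEq V]

/-- The set of edges of `G` with both endpoints in `S`, i.e. the edge set `E(S)`
of the induced subgraph `G[S]`. -/
def edgesIn (G : SimpleGraph V) (S : Finset V) : Finset (Sym2 V) :=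
  Finset.univ.filter (fun e => e ∈ G.edgeSet ∧ ∀ v ∈ e, v ∈ S)

/-- The (unweighted) degree of a vertex `v` in the induced subgraph `G[S]`. -/
def ndeg (G : SimpleGraph V) (S : Finset V) (v : V) : ℕ :=
  ((edgesIn G S).filter (fun e => v ∈ e)).card

/-- `G[S]` is `k`-vertex-connected: it has at least `k+1` vertices, and deleting any set
of fewer than `k` vertices leaves a connected graph. -/
def VertexConnected (G : SimpleGraph V) (S : Finset V) (k : ℕ) : Prop :=
  k + 1 ≤ S.card ∧ ∀ D : Finset V, D ⊆ S → D.card < k →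
    (G.induce ((S \ D : Finset V) : Set V)).Connected

lemma mem_edgesIn {G : SimpleGraph V} {S : Finset V} {e : Sym2 V} :
    e ∈ edgesIn G S ↔ e ∈ G.edgeSet ∧ ∀ v ∈ e, v ∈ S := by
  simp [edgesIn]

/-- edge count bound -/
lemma edgesIn_card_le (G : SimpleGraph V) (S : Finset V) :
    (edgesIn G S).card ≤ S.card.choose 2 := by
  have hsub : edgesIn G S ∪ S.image Sym2.diag ⊆ S.sym2 := by
    intro e he
    rcases Finset.mem_union.mp he with h | h
    · rw [mem_edgesIn] at h
      exact Finset.mem_sym2_iff.mpr h.2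
    · obtain ⟨a, ha, rfl⟩ := Finset.mem_image.mp h
      exact Finset.diag_mem_sym2_iff.mpr ha
  have hdisj : Disjoint (edgesIn G S) (S.image Sym2.diag) := by
    rw [Finset.disjoint_left]
    intro e he hd
    obtain ⟨a, _, rfl⟩ := Finset.mem_image.mp hd
    exact G.not_isDiag_of_mem_edgeSet (mem_edgesIn.mp he).1 (Sym2.diag_isDiag a)
  have hinj : (S.image Sym2.diag).card = S.card :=
    Finset.card_image_of_injective _ Sym2.diag_injective
  have hcard := Finset.card_le_card hsub
  rw [Finset.card_union_of_disjoint hdisj, hinj, Finset.card_sym2] at hcard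
  have h1 : (S.card + 1).choose 2 = (S.card + 1) * S.card / 2 := by
    rw [Nat.choose_two_right]; simp
  have h2 : S.card.choose 2 = S.card * (S.card - 1) / 2 := Nat.choose_two_right _
  have key : ∀ n : ℕ, (n + 1) * n = n * (n - 1) + 2 * n := by
    intro n
    cases n with
    | zero => simp
    | succ m => simp [Nat.add_sub_cancel]; ring
  have key' := key S.card
  omega

/-- If all `S`-neighbors of `v` lie in `W`, then the degree of `v` in `S` is at most
`|W \ {v}|`. -/
lemma ndeg_le_card_erase {G : SimpleGraph V} {S W : Finset V} {v : V}
    (h : ∀ w ∈ S, G.Adj v w → w ∈ W) : ndeg G S v ≤ (W.erase v).card := by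
  classical
  apply Finset.card_le_card_of_injOn (fun e => if he : v ∈ e then Sym2.Mem.other' he else v)
  · intro e he
    rw [Finset.mem_coe, Finset.mem_filter] at he
    obtain ⟨heS, hv⟩ := he
    simp only [Finset.mem_coe]
    rw [dif_pos hv]
    rw [mem_edgesIn] at heS
    have hadj : G.Adj v (Sym2.Mem.other' hv) := by
      rw [← SimpleGraph.mem_edgeSet, Sym2.other_spec' hv]
      exact heS.1
    have hmem : Sym2.Mem.other' hv ∈ S := heS.2 _ (Sym2.other_mem' hv)
    exact Finset.mem_erase.mpr ⟨(G.ne_of_adj hadj).symm, h _ hmem hadj⟩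
  · intro e₁ h₁ e₂ h₂ heq
    rw [Finset.mem_coe, Finset.mem_filter] at h₁ h₂
    simp only [dif_pos h₁.2, dif_pos h₂.2] at heq
    rw [← Sym2.other_spec' h₁.2, ← Sym2.other_spec' h₂.2, heq]

lemma card_edgesIn_le_erase {G : SimpleGraph V} {S : Finset V} (v : V) :
    (edgesIn G S).card ≤ (edgesIn G (S.erase v)).card + ndeg G S v := by
  classical
  have hsplit := Finset.card_filter_add_card_filter_not
    (s := edgesIn G S) (p := fun e => v ∈ e)
  have hsub : (edgesIn G S).filter (fun e => ¬ v ∈ e) ⊆ edgesIn G (S.erase v) := by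
    intro e he
    rw [Finset.mem_filter] at he
    rw [mem_edgesIn] at he ⊢
    refine ⟨he.1.1, fun w hw => Finset.mem_erase.mpr ⟨?_, he.1.2 w hw⟩⟩
    rintro rfl; exact he.2 hw
  have := Finset.card_le_card hsub
  unfold ndeg
  omega

/-- Splitting edges along a separation: if there are no edges between `S₁` and `S₂`,
then every edge of `S₁ ∪ S₂ ∪ D` lies within `S₁ ∪ D` or within `S₂ ∪ D`. -/
lemma edgesIn_subset_union {G : SimpleGraph V} {S S₁ S₂ D : Finset V}
    (hS : S ⊆ S₁ ∪ S₂ ∪ D)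
    (hadj : ∀ u ∈ S₁, ∀ w ∈ S₂, ¬ G.Adj u w) :
    edgesIn G S ⊆ edgesIn G (S₁ ∪ D) ∪ edgesIn G (S₂ ∪ D) := by
  intro e he
  induction e with
  | _ p q =>
    rw [mem_edgesIn] at he
    obtain ⟨hedge, hmem⟩ := he
    have hGadj : G.Adj p q := (SimpleGraph.mem_edgeSet G).mp hedge
    have hp := hS (hmem p (Sym2.mem_mk_left p q))
    have hq := hS (hmem q (Sym2.mem_mk_right p q))
    simp only [Finset.mem_union] at hp hq
    have memify : ∀ a b : V, (a ∈ S₁ ∪ D ∧ b ∈ S₁ ∪ D) ∨ (a ∈ S₂ ∪ D ∧ b ∈ S₂ ∪ D) →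
        s(a, b) ∈ edgesIn G (S₁ ∪ D) ∪ edgesIn G (S₂ ∪ D) → True := fun _ _ _ _ => trivial
    have goal1 : p ∈ S₁ ∪ D → q ∈ S₁ ∪ D → s(p,q) ∈ edgesIn G (S₁ ∪ D) ∪ edgesIn G (S₂ ∪ D) := by
      intro h1 h2
      refine Finset.mem_union_left _ (mem_edgesIn.mpr ⟨hedge, ?_⟩)
      intro v hv
      rcases Sym2.mem_iff.mp hv with rfl | rfl <;> assumption
    have goal2 : p ∈ S₂ ∪ D → q ∈ S₂ ∪ D → s(p,q) ∈ edgesIn G (S₁ ∪ D) ∪ edgesIn G (S₂ ∪ D) := by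
      intro h1 h2
      refine Finset.mem_union_right _ (mem_edgesIn.mpr ⟨hedge, ?_⟩)
      intro v hv
      rcases Sym2.mem_iff.mp hv with rfl | rfl <;> assumption
    rcases hp with (hp | hp) | hp
    · -- p ∈ S₁ : q ∉ S₂
      have hq' : q ∉ S₂ := fun h => hadj p hp q h hGadj
      apply goal1 (Finset.mem_union_left _ hp)
      rcases hq with (h | h) | h
      · exact Finset.mem_union_left _ h
      · exact absurd h hq'
      · exact Finset.mem_union_right _ h
    · -- p ∈ S₂ : q ∉ S₁
      have hq' : q ∉ S₁ := fun h => hadj q h p hp hGadj.symm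
      apply goal2 (Finset.mem_union_left _ hp)
      rcases hq with (h | h) | h
      · exact absurd h hq'
      · exact Finset.mem_union_left _ h
      · exact Finset.mem_union_right _ h
    · -- p ∈ D
      rcases hq with (h | h) | h
      · exact goal1 (Finset.mem_union_right _ hp) (Finset.mem_union_left _ h)
      · exact goal2 (Finset.mem_union_right _ hp) (Finset.mem_union_left _ h)
      · exact goal1 (Finset.mem_union_right _ hp) (Finset.mem_union_right _ h)

/-- The threshold constant `b = d⌊d/2⌋ + 1/2` in Mader's argument. -/
def maderB (d : ℕ) : ℝ := d * (d / 2 : ℕ) + 1 / 2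

/-- A set is *good* if it has more than `d` vertices and spans more than
`d|S| - b` edges. -/
def MaderGood (G : SimpleGraph V) (d : ℕ) (S : Finset V) : Prop :=
  d + 1 ≤ S.card ∧ (d : ℝ) * S.card - maderB d < ((edgesIn G S).card : ℝ)

lemma mader_arith (d : ℕ) (hd : 0 < d) :
    (d + 1).choose 2 + d * (d / 2) + 1 ≤ d * (d + 1) := by
  rw [Nat.choose_two_right]
  obtain ⟨m, hm | hm⟩ := Nat.even_or_odd' d
  · subst hm
    have hm1 : 1 ≤ m := by omega
    have h2 : (2 * m + 1) * (2 * m + 1 - 1) / 2 = (2 * m + 1) * m := by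
      have : (2 * m + 1) * (2 * m + 1 - 1) = 2 * ((2 * m + 1) * m) := by
        simp [Nat.add_sub_cancel]; ring
      omega
    have h3 : 2 * m / 2 = m := by omega
    rw [h2, h3]; nlinarith
  · subst hm
    have h2 : (2 * m + 1 + 1) * (2 * m + 1 + 1 - 1) / 2 = (m + 1) * (2 * m + 1) := by
      have : (2 * m + 1 + 1) * (2 * m + 1 + 1 - 1) = 2 * ((m + 1) * (2 * m + 1)) := by
        simp [Nat.add_sub_cancel]; ring
      omega
    have h3 : (2 * m + 1) / 2 = m := by omega
    rw [h2, h3]; nlinarith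

/-- No good set has exactly `d+1` vertices; hence good sets have at least `d+2`. -/
lemma MaderGood.card_ge {G : SimpleGraph V} {d : ℕ} {S : Finset V} (hd : 0 < d)
    (h : MaderGood G d S) : d + 2 ≤ S.card := by
  rcases h with ⟨h1, h2⟩
  rcases Nat.lt_or_ge S.card (d + 2) with hlt | hge
  · exfalso
    have hcard : S.card = d + 1 := by omega
    have hle := edgesIn_card_le G S
    rw [hcard] at hle h2
    have harith := mader_arith d hd
    have hle2 : (edgesIn G S).card + (d * (d / 2) + 1) ≤ d * (d + 1) := by omega
    have hle3 := (Nat.cast_le (α := ℝ)).mpr hle2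
    rw [maderB] at h2
    push_cast at h2 hle3
    linarith
  · exact hge

/-- Mader's theorem: if a finite simple graph has density `|E|/|V| ≥ d` for a positive
integer `d`, then it has an induced subgraph `G[S]` that is `(⌊d/2⌋+1)`-vertex-connected
and in which every vertex has degree greater than `d`. -/
theorem mader (G : SimpleGraph V) (d : ℕ) (hd : 0 < d)
    (hdens : (d : ℝ) ≤ ((edgesIn G Finset.univ).card : ℝ) / (Fintype.card V : ℝ)) :
    ∃ S : Finset V,
      VertexConnected G S (d / 2 + 1) ∧
      ∀ v ∈ S, d < ndeg G S v := by
  have hn : 0 < Fintype.card V := by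
    by_contra h
    have h0 : Fintype.card V = 0 := by omega
    rw [h0] at hdens
    simp at hdens
    have : (0:ℝ) < (d:ℝ) := by exact_mod_cast hd
    linarith
  have hE : (d : ℝ) * (Fintype.card V : ℝ) ≤ ((edgesIn G Finset.univ).card : ℝ) := by
    rw [le_div_iff₀ (by exact_mod_cast hn)] at hdens
    linarith
  have hEn : d * Fintype.card V ≤ (edgesIn G (Finset.univ : Finset V)).card := by
    exact_mod_cast hE
  have hugood : MaderGood G d Finset.univ := by
    constructor
    · rw [Finset.card_univ]
      have hle := edgesIn_card_le G (Finset.univ : Finset V)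
      rw [Finset.card_univ, Nat.choose_two_right] at hle
      by_contra hlt
      push_neg at hlt
      have h1 : Fintype.card V - 1 ≤ d - 1 := by omega
      have h2 : Fintype.card V * (Fintype.card V - 1) ≤ Fintype.card V * (d - 1) :=
        Nat.mul_le_mul_left _ h1
      have h3 : 2 * (d * Fintype.card V) ≤ Fintype.card V * (Fintype.card V - 1) := by omega
      have h4 : Fintype.card V * (d - 1) ≤ Fintype.card V * d := Nat.mul_le_mul_left _ (by omega)
      have h5 : Fintype.card V * d = d * Fintype.card V := Nat.mul_comm _ _
      have h6 : 0 < d * Fintype.card V := Nat.mul_pos hd hn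
      linarith
    · rw [Finset.card_univ]
      have hb : 0 < maderB d := by rw [maderB]; positivity
      linarith
  obtain ⟨S, hSmem, hSmin⟩ := Finset.exists_min_image
    (Finset.univ.filter (fun T => MaderGood G d T)) Finset.card
    ⟨Finset.univ, by simp [hugood]⟩
  have hSgood : MaderGood G d S := (Finset.mem_filter.mp hSmem).2
  have hSmin' : ∀ T : Finset V, MaderGood G d T → S.card ≤ T.card := fun T hT =>
    hSmin T (by simp [hT])
  have hScard := hSgood.card_ge hd
  -- minimum degree
  have hdeg : ∀ v ∈ S, d < ndeg G S v := by
    intro v hv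
    by_contra hle
    push_neg at hle
    have hgood' : MaderGood G d (S.erase v) := by
      constructor
      · rw [Finset.card_erase_of_mem hv]; omega
      · have h1 := card_edgesIn_le_erase (G := G) (S := S) v
        have h2 : (edgesIn G S).card ≤ (edgesIn G (S.erase v)).card + d := by omega
        have h3 := (Nat.cast_le (α := ℝ)).mpr h2
        push_cast at h3
        rw [Finset.card_erase_of_mem hv]
        have hc1 : (1:ℕ) ≤ S.card := by omega
        rw [Nat.cast_sub hc1]
        push_cast
        have := hSgood.2
        linarith
    have := hSmin' _ hgood'
    rw [Finset.card_erase_of_mem hv] at this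
    omega
  refine ⟨S, ⟨?_, ?_⟩, hdeg⟩
  · have : d / 2 ≤ d := Nat.div_le_self d 2
    omega
  · intro D hDsub hDcard
    by_contra hcon
    have hDS : D.card ≤ S.card := Finset.card_le_card hDsub
    have hSD : (S \ D).Nonempty := by
      rw [← Finset.card_pos, Finset.card_sdiff_of_subset hDsub]
      have : d / 2 ≤ d := Nat.div_le_self d 2
      omega
    set A : Set V := ((S \ D : Finset V) : Set V) with hA
    have hnA : Nonempty A := by
      obtain ⟨x, hx⟩ := hSD
      exact ⟨⟨x, by simpa [hA] using hx⟩⟩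
    have hnp : ¬ (G.induce A).Preconnected := fun hp =>
      hcon (SimpleGraph.connected_iff _ |>.mpr ⟨hp, hnA⟩)
    rw [SimpleGraph.Preconnected] at hnp
    push_neg at hnp
    obtain ⟨a, b, hab⟩ := hnp
    set S₁ : Finset V :=
      (S \ D).filter (fun w => ∃ h : w ∈ A, (G.induce A).Reachable a ⟨w, h⟩) with hS₁
    set S₂ : Finset V := (S \ D) \ S₁ with hS₂
    have hS₁sub : S₁ ⊆ S \ D := Finset.filter_subset _ _
    have hS₂sub : S₂ ⊆ S \ D := Finset.sdiff_subset
    have hmemA : ∀ w ∈ S \ D, w ∈ A := fun w hw => by simpa [hA] using hw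
    have haS : (a : V) ∈ S \ D := by have := a.2; simpa [hA] using this
    have haS₁ : (a : V) ∈ S₁ := by
      rw [hS₁, Finset.mem_filter]
      exact ⟨haS, a.2, SimpleGraph.Reachable.refl a⟩
    have hbS : (b : V) ∈ S \ D := by have := b.2; simpa [hA] using this
    have hbS₂ : (b : V) ∈ S₂ := by
      rw [hS₂, Finset.mem_sdiff]
      refine ⟨hbS, fun hb1 => ?_⟩
      rw [hS₁, Finset.mem_filter] at hb1
      obtain ⟨-, h, hr⟩ := hb1
      exact hab hr
    have hclosure : ∀ u ∈ S₁, ∀ w ∈ S \ D, G.Adj u w → w ∈ S₁ := by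
      intro u hu w hw hadj
      rw [hS₁, Finset.mem_filter] at hu ⊢
      obtain ⟨huSD, hu2, hr⟩ := hu
      refine ⟨hw, hmemA w hw, ?_⟩
      refine hr.trans (SimpleGraph.Adj.reachable ?_)
      simpa [SimpleGraph.comap_adj] using hadj
    have hnoadj : ∀ u ∈ S₁, ∀ w ∈ S₂, ¬ G.Adj u w := by
      intro u hu w hw hadj
      rw [hS₂, Finset.mem_sdiff] at hw
      exact hw.2 (hclosure u hu w hw.1 hadj)
    set U₁ := S₁ ∪ D with hU₁
    set U₂ := S₂ ∪ D with hU₂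
    have hdisj₁ : Disjoint S₁ D :=
      Finset.disjoint_of_subset_left hS₁sub Finset.sdiff_disjoint
    have hdisj₂ : Disjoint S₂ D :=
      Finset.disjoint_of_subset_left hS₂sub Finset.sdiff_disjoint
    have hcardU₁ : U₁.card = S₁.card + D.card := Finset.card_union_of_disjoint hdisj₁
    have hcardU₂ : U₂.card = S₂.card + D.card := Finset.card_union_of_disjoint hdisj₂
    have hcardSD : (S \ D).card = S.card - D.card := Finset.card_sdiff_of_subset hDsub
    have hcardS₂ : S₂.card = (S \ D).card - S₁.card := Finset.card_sdiff_of_subset hS₁sub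
    have hS₁lt : S₁.card < (S \ D).card :=
      Finset.card_lt_card ((Finset.ssubset_iff_of_subset hS₁sub).mpr
        ⟨b, hbS, (Finset.mem_sdiff.mp hbS₂).2⟩)
    have hS₂lt : S₂.card < (S \ D).card :=
      Finset.card_lt_card ((Finset.ssubset_iff_of_subset hS₂sub).mpr
        ⟨a, haS, fun h => (Finset.mem_sdiff.mp h).2 haS₁⟩)
    have hU₁card : d + 2 ≤ U₁.card := by
      have hu : (a : V) ∈ S := (Finset.mem_sdiff.mp haS).1
      have h1 := hdeg _ hu
      have h2 : ndeg G S (a : V) ≤ (U₁.erase (a : V)).card := by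
        apply ndeg_le_card_erase
        intro w hwS hadj
        by_cases hwD : w ∈ D
        · exact Finset.mem_union_right _ hwD
        · exact Finset.mem_union_left _
            (hclosure _ haS₁ w (Finset.mem_sdiff.mpr ⟨hwS, hwD⟩) hadj)
      have h3 : (a : V) ∈ U₁ := Finset.mem_union_left _ haS₁
      have h4 := Finset.card_erase_of_mem h3
      omega
    have hU₂card : d + 2 ≤ U₂.card := by
      have hu : (b : V) ∈ S := (Finset.mem_sdiff.mp hbS).1
      have h1 := hdeg _ hu
      have h2 : ndeg G S (b : V) ≤ (U₂.erase (b : V)).card := by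
        apply ndeg_le_card_erase
        intro w hwS hadj
        by_cases hwD : w ∈ D
        · exact Finset.mem_union_right _ hwD
        · have hw' : w ∈ S \ D := Finset.mem_sdiff.mpr ⟨hwS, hwD⟩
          refine Finset.mem_union_left _ ?_
          rw [hS₂, Finset.mem_sdiff]
          refine ⟨hw', fun hw1 => ?_⟩
          exact hnoadj w hw1 _ hbS₂ hadj.symm
      have h3 : (b : V) ∈ U₂ := Finset.mem_union_left _ hbS₂
      have h4 := Finset.card_erase_of_mem h3
      omega
    have hU₁lt : U₁.card < S.card := by omega
    have hU₂lt : U₂.card < S.card := by omega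
    have hng₁ : ¬ MaderGood G d U₁ := fun h => by have := hSmin' _ h; omega
    have hng₂ : ¬ MaderGood G d U₂ := fun h => by have := hSmin' _ h; omega
    have he₁ : ((edgesIn G U₁).card : ℝ) ≤ (d : ℝ) * U₁.card - maderB d := by
      by_contra hgt; push_neg at hgt; exact hng₁ ⟨by omega, hgt⟩
    have he₂ : ((edgesIn G U₂).card : ℝ) ≤ (d : ℝ) * U₂.card - maderB d := by
      by_contra hgt; push_neg at hgt; exact hng₂ ⟨by omega, hgt⟩
    have hsubS : S ⊆ S₁ ∪ S₂ ∪ D := by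
      intro w hw
      by_cases hwD : w ∈ D
      · exact Finset.mem_union_right _ hwD
      · refine Finset.mem_union_left _ ?_
        have hw' : w ∈ S \ D := Finset.mem_sdiff.mpr ⟨hw, hwD⟩
        by_cases hw1 : w ∈ S₁
        · exact Finset.mem_union_left _ hw1
        · exact Finset.mem_union_right _ (by rw [hS₂, Finset.mem_sdiff]; exact ⟨hw', hw1⟩)
    have hsplit := edgesIn_subset_union (G := G) hsubS hnoadj
    have hEsum : (edgesIn G S).card ≤ (edgesIn G U₁).card + (edgesIn G U₂).card :=
      le_trans (Finset.card_le_card hsplit) (Finset.card_union_le _ _)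
    have hcards : U₁.card + U₂.card = S.card + D.card := by omega
    have hDle : D.card ≤ d / 2 := by omega
    have hdD : d * D.card ≤ d * (d / 2) := Nat.mul_le_mul_left d hDle
    have hcast : ((edgesIn G S).card : ℝ) ≤
        ((edgesIn G U₁).card : ℝ) + ((edgesIn G U₂).card : ℝ) := by exact_mod_cast hEsum
    have hcastc : (U₁.card : ℝ) + (U₂.card : ℝ) = (S.card : ℝ) + (D.card : ℝ) := by
      exact_mod_cast hcards
    have hcastd : (d : ℝ) * (D.card : ℝ) ≤ (d : ℝ) * ((d / 2 : ℕ) : ℝ) := by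
      exact_mod_cast hdD
    have hmul : (d : ℝ) * ((U₁.card : ℝ) + (U₂.card : ℝ)) =
        (d : ℝ) * ((S.card : ℝ) + (D.card : ℝ)) := by rw [hcastc]
    have hgoodS := hSgood.2
    have hbval : maderB d = (d : ℝ) * ((d / 2 : ℕ) : ℝ) + 1 / 2 := rfl
    nlinarith [hgoodS, hcast, he₁, he₂, hmul, hcastd]
end
end

section
/- Let G=(V,E,w) be an edge-weighted graph with E≠∅ and let d be a positive real with d(V) ≥ d; set r = ⌈d/w_max⌉. Among all subsets S ⊆ V satisfying |S| ≥ r and w(S) > d(V)·(|S| − r/2), let S be one of minimum cardinality (such a subset exists, since V itself satisfies these conditions). Then |S| ≥ r + 1 and every vertex of G[S] has weighted degree strictly greater than d(V) in G[S]. -/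
open Finset
open scoped Classical

noncomputable section

variable {V : Type*} [Fintype V] [DecidableEq V]

/-- `w(S)`: the total weight of the edges of the induced subgraph `G[S]`. -/
def wsum (G : SimpleGraph V) (w : Sym2 V → ℝ) (S : Finset V) : ℝ :=
  ∑ e ∈ edgesIn G S, w e

/-- The density `d(S) = w(S)/|S|` of the induced subgraph `G[S]`. -/
def density (G : SimpleGraph V) (w : Sym2 V → ℝ) (S : Finset V) : ℝ :=
  wsum G w S / S.card

/-- The weighted degree of a vertex `v` in the induced subgraph `G[S]`. -/
def wdeg (G : SimpleGraph V) (w : Sym2 V → ℝ) (S : Finset V) (v : V) : ℝ :=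
  ∑ e ∈ (edgesIn G S).filter (fun e => v ∈ e), w e

/-- The edge-weighted graph `G[S]` is `k`-edge-connected: it is connected, and every set `F`
of its edges whose removal disconnects it has total weight at least `k`. -/
def EdgeConnected (G : SimpleGraph V) (w : Sym2 V → ℝ) (S : Finset V) (k : ℝ) : Prop :=
  (G.induce (S : Set V)).Connected ∧
  ∀ F : Finset (Sym2 V), F ⊆ edgesIn G S →
    ¬ ((G.deleteEdges (F : Set (Sym2 V))).induce (S : Set V)).Connected →
    k ≤ ∑ e ∈ F, w e

lemma edgesIn_erase (G : SimpleGraph V) (S : Finset V) (v : V) :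
    edgesIn G (S.erase v) = (edgesIn G S).filter (fun e => v ∉ e) := by
  ext e
  simp only [edgesIn, mem_filter, mem_univ, true_and, Finset.mem_erase]
  constructor
  · rintro ⟨he, h⟩
    exact ⟨⟨he, fun u hu => (h u hu).2⟩, fun hv => (h v hv).1 rfl⟩
  · rintro ⟨⟨he, h⟩, hv⟩
    exact ⟨he, fun u hu => ⟨fun h' => hv (h' ▸ hu), h u hu⟩⟩

lemma wsum_erase (G : SimpleGraph V) (w : Sym2 V → ℝ) (S : Finset V) (v : V) :
    wsum G w S = wsum G w (S.erase v) + wdeg G w S v := by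
  rw [wsum, wsum, wdeg, edgesIn_erase]
  rw [← Finset.sum_filter_add_sum_filter_not (edgesIn G S) (fun e => v ∈ e)]
  ring

lemma card_edgesIn_le (G : SimpleGraph V) (S : Finset V) :
    (edgesIn G S).card ≤ (S.card).choose 2 := by
  rw [← Sym2.card_image_offDiag S]
  apply Finset.card_le_card
  intro e he
  simp only [edgesIn, mem_filter, mem_univ, true_and] at he
  obtain ⟨he, hmem⟩ := he
  induction e with
  | _ a b =>
    rw [SimpleGraph.mem_edgeSet] at he
    refine Finset.mem_image.mpr ⟨(a, b), ?_, rfl⟩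
    rw [Finset.mem_offDiag]
    exact ⟨hmem a (by simp), hmem b (by simp), he.ne⟩

/-- If `d(V) ≥ d > 0`, `r = ⌈d/wmax⌉`, and `S` is a minimum-cardinality subset among those
satisfying `|S| ≥ r` and `w(S) > d(V)·(|S| - r/2)`, then `|S| ≥ r+1` and every vertex of
`G[S]` has weighted degree greater than `d(V)` in `G[S]`. -/
theorem minimal_subset_min_degree (G : SimpleGraph V) (w : Sym2 V → ℝ)
    (hE : (edgesIn G Finset.univ).Nonempty)
    (hw : ∀ e ∈ G.edgeSet, 0 < w e)
    (d : ℝ) (hd : 0 < d)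
    (hdens : density G w Finset.univ ≥ d)
    (S : Finset V)
    (hScard : ⌈d / (edgesIn G Finset.univ).sup' hE w⌉₊ ≤ S.card)
    (hSw : density G w Finset.univ *
        ((S.card : ℝ) - (⌈d / (edgesIn G Finset.univ).sup' hE w⌉₊ : ℝ) / 2) < wsum G w S)
    (hSmin : ∀ T : Finset V,
      ⌈d / (edgesIn G Finset.univ).sup' hE w⌉₊ ≤ T.card →
      density G w Finset.univ *
          ((T.card : ℝ) - (⌈d / (edgesIn G Finset.univ).sup' hE w⌉₊ : ℝ) / 2) < wsum G w T →
      S.card ≤ T.card) :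
    ⌈d / (edgesIn G Finset.univ).sup' hE w⌉₊ + 1 ≤ S.card ∧
      ∀ v ∈ S, density G w Finset.univ < wdeg G w S v := by
  set wmax : ℝ := (edgesIn G Finset.univ).sup' hE w with hwmax
  set r : ℕ := ⌈d / wmax⌉₊ with hr
  set ρ : ℝ := density G w Finset.univ with hρ
  have hwmax_pos : 0 < wmax := by
    obtain ⟨e, he⟩ := hE
    have he' : e ∈ G.edgeSet := by
      simpa [edgesIn] using (Finset.mem_filter.mp he).2.1
    exact lt_of_lt_of_le (hw e he') (Finset.le_sup' w he)
  have hρd : d ≤ ρ := hdens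
  have hρ_pos : 0 < ρ := lt_of_lt_of_le hd hρd
  have hr_pos : 1 ≤ r := Nat.one_le_iff_ne_zero.mpr (by
    simp only [hr, ne_eq, Nat.ceil_eq_zero, not_le]
    exact div_pos hd hwmax_pos)
  -- upper bound for wsum of any T
  have hub : ∀ T : Finset V, wsum G w T ≤ ((T.card : ℝ) * (T.card - 1) / 2) * wmax := by
    intro T
    have h1 : wsum G w T ≤ (edgesIn G T).card * wmax := by
      rw [wsum]
      calc ∑ e ∈ edgesIn G T, w e ≤ ∑ _e ∈ edgesIn G T, wmax := by
            apply Finset.sum_le_sum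
            intro e he
            apply Finset.le_sup'
            simp only [edgesIn, mem_filter, mem_univ, true_and] at he ⊢
            exact ⟨he.1, fun v _ => trivial⟩
        _ = (edgesIn G T).card * wmax := by rw [Finset.sum_const, nsmul_eq_mul]
    have h2 : ((edgesIn G T).card : ℝ) ≤ (T.card : ℝ) * (T.card - 1) / 2 := by
      calc ((edgesIn G T).card : ℝ) ≤ ((T.card).choose 2 : ℝ) := by
            exact_mod_cast card_edgesIn_le G T
        _ = ((T.card * (T.card - 1) / 2 : ℕ) : ℝ) := by rw [Nat.choose_two_right]
        _ ≤ ((T.card * (T.card - 1) : ℕ) : ℝ) / 2 := by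
            exact_mod_cast Nat.cast_div_le
        _ ≤ (T.card : ℝ) * (T.card - 1) / 2 := by
            rcases Nat.eq_zero_or_pos T.card with h | h
            · simp [h]
            · push_cast [Nat.cast_sub h]
              ring_nf
              exact le_refl _
    calc wsum G w T ≤ (edgesIn G T).card * wmax := h1
      _ ≤ ((T.card : ℝ) * (T.card - 1) / 2) * wmax :=
          mul_le_mul_of_nonneg_right h2 hwmax_pos.le
  have h1 : r + 1 ≤ S.card := by
    by_contra h
    have hcard : S.card = r := le_antisymm (by omega) hScard
    have hlow : d * r / 2 < wsum G w S := by
      have : ρ * ((S.card : ℝ) - (r : ℝ) / 2) < wsum G w S := hSw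
      rw [hcard] at this
      calc d * r / 2 = d * ((r : ℝ) / 2) := by ring
        _ ≤ ρ * ((r : ℝ) / 2) := by
            apply mul_le_mul_of_nonneg_right hρd
            positivity
        _ = ρ * ((r : ℝ) - (r : ℝ) / 2) := by ring
        _ < wsum G w S := this
    have hup : wsum G w S ≤ ((r : ℝ) * ((r : ℝ) - 1) / 2) * wmax := by
      have := hub S
      rwa [hcard] at this
    have hrr : (0 : ℝ) < (r : ℝ) / 2 := by
      have : (1 : ℝ) ≤ (r : ℝ) := by exact_mod_cast hr_pos
      linarith
    have hkey : d < ((r : ℝ) - 1) * wmax := by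
      have h3 : d * ((r : ℝ) / 2) < (((r : ℝ) - 1) * wmax) * ((r : ℝ) / 2) := by
        calc d * ((r : ℝ) / 2) = d * r / 2 := by ring
          _ < ((r : ℝ) * ((r : ℝ) - 1) / 2) * wmax := lt_of_lt_of_le hlow hup
          _ = (((r : ℝ) - 1) * wmax) * ((r : ℝ) / 2) := by ring
      exact lt_of_mul_lt_mul_right (by linarith [h3]) hrr.le
    have hceil : (r : ℝ) < d / wmax + 1 := by
      apply Nat.ceil_lt_add_one
      positivity
    have : ((r : ℝ) - 1) * wmax < d := by
      have h4 : (r : ℝ) - 1 < d / wmax := by linarith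
      calc ((r : ℝ) - 1) * wmax < (d / wmax) * wmax :=
            mul_lt_mul_of_pos_right h4 hwmax_pos
        _ = d := div_mul_cancel₀ d (ne_of_gt hwmax_pos)
    linarith
  refine ⟨h1, fun v hv => ?_⟩
  by_contra hle
  push_neg at hle
  set T := S.erase v with hT
  have hTcard : T.card = S.card - 1 := Finset.card_erase_of_mem hv
  have hScard1 : 1 ≤ S.card := Finset.card_pos.mpr ⟨v, hv⟩
  have hTcardR : (T.card : ℝ) = (S.card : ℝ) - 1 := by
    rw [hTcard]
    push_cast [Nat.cast_sub hScard1]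
    ring
  have hTr : r ≤ T.card := by omega
  have hTw : ρ * ((T.card : ℝ) - (r : ℝ) / 2) < wsum G w T := by
    have hsplit := wsum_erase G w S v
    have : wsum G w T = wsum G w S - wdeg G w S v := by rw [hsplit, hT]; ring
    rw [this, hTcardR]
    have := hSw
    nlinarith [hSw, hle]
  have := hSmin T hTr hTw
  have : T.card < S.card := Finset.card_erase_lt_of_mem hv
  omega
end
end
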